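/- Let λ be an irrational real number. Then the set Σ_λ = {(e^{w+r}, e^{λ·w}) : w ∈ ℂ, r ∈ ℝ} is dense in ℂ². -/

import Mathlib

open Complex

lemma dense_sub (l : ℝ) (hl : Irrational l) :
    Dense (↑(AddSubgroup.closure ({2 * Real.pi / l, 2 * Real.pi} : Set ℝ)) : Set ℝ) := by
  rcases (AddSubgroup.closure ({2 * Real.pi / l, 2 * Real.pi} : Set ℝ)).dense_or_cyclic with
    h | ⟨a, ha⟩
  · exact h
  · exfalso
    have hl0 : l ≠ 0 := hl.ne_zero
    have h1 : (2 * Real.pi / l) ∈ AddSubgroup.closure ({2 * Real.pi / l, 2 * Real.pi} : Set ℝ) :=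
      AddSubgroup.subset_closure (by simp)
    have h2 : (2 * Real.pi) ∈ AddSubgroup.closure ({2 * Real.pi / l, 2 * Real.pi} : Set ℝ) :=
      AddSubgroup.subset_closure (by simp)
    rw [ha, AddSubgroup.mem_closure_singleton] at h1 h2
    obtain ⟨n, hn⟩ := h1
    obtain ⟨k, hk⟩ := h2
    have hpi : (2 * Real.pi) ≠ 0 := by positivity
    have ha0 : a ≠ 0 := by
      intro h
      rw [zsmul_eq_mul, h, mul_zero] at hk
      exact hpi hk.symm
    have hln : l * n = k := by
      have h' : l * ((n : ℝ) * a) = (k : ℝ) * a := by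
        rw [zsmul_eq_mul] at hn hk
        rw [hn, hk]; field_simp
      have h'' : (l * n) * a = (k : ℝ) * a := by linarith [h']
      exact mul_right_cancel₀ ha0 h''
    have hn0 : (n : ℝ) ≠ 0 := by
      intro h
      rw [h, mul_zero] at hln
      rw [zsmul_eq_mul, ← hln, zero_mul] at hk
      exact hpi hk.symm
    exact hl ⟨(k : ℚ) / (n : ℚ), by push_cast; field_simp; linarith [hln]⟩

theorem sigma_lambda_dense (l : ℝ) (hl : Irrational l) :
    Dense {p : ℂ × ℂ | ∃ w : ℂ, ∃ r : ℝ,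
      p = (Complex.exp (w + (r : ℂ)), Complex.exp ((l : ℂ) * w))} := by
  set S := {p : ℂ × ℂ | ∃ w : ℂ, ∃ r : ℝ,
      p = (Complex.exp (w + (r : ℂ)), Complex.exp ((l : ℂ) * w))} with hS
  have hl0 : l ≠ 0 := hl.ne_zero
  have hl0' : (l : ℂ) ≠ 0 := by exact_mod_cast hl0
  have key : ∀ u v : ℂ, u ≠ 0 → v ≠ 0 → (u, v) ∈ closure S := by
    intro u v hu hv
    set α := Complex.log u with hα
    set β := Complex.log v with hβ
    set g : ℝ → ℂ × ℂ := fun θ =>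
      (Complex.exp ((α.re : ℂ) + ((β.im / l + θ : ℝ) : ℂ) * Complex.I), v) with hg
    have hgc : Continuous g := by
      apply Continuous.prodMk _ continuous_const
      exact Complex.continuous_exp.comp (by continuity)
    have himg : ∀ x ∈ (↑(AddSubgroup.closure
        ({2 * Real.pi / l, 2 * Real.pi} : Set ℝ)) : Set ℝ), g x ∈ S := by
      intro x hx
      rw [SetLike.mem_coe, AddSubgroup.mem_closure_pair] at hx
      obtain ⟨k, m, hkm⟩ := hx
      set w : ℂ := ((β.re / l : ℝ) : ℂ) + (((β.im + 2 * Real.pi * k) / l : ℝ) : ℂ) * Complex.I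
        with hw
      refine ⟨w, α.re - β.re / l, ?_⟩
      have hx' : (β.im / l + x : ℝ) =
          ((β.im + 2 * Real.pi * k) / l + 2 * Real.pi * m : ℝ) := by
        rw [← hkm, zsmul_eq_mul, zsmul_eq_mul]
        field_simp
        ring
      have h1 : ((α.re : ℂ) + ((β.im / l + x : ℝ) : ℂ) * Complex.I) =
          (w + ((α.re - β.re / l : ℝ) : ℂ)) + (m : ℂ) * (2 * Real.pi * Complex.I) := by
        rw [hx', hw]
        push_cast
        ring
      have h2 : (l : ℂ) * w =
          ((β.re : ℝ) : ℂ) + ((β.im : ℝ) : ℂ) * Complex.I + (k : ℂ) * (2 * Real.pi * Complex.I) := by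
        rw [hw]
        push_cast
        field_simp
        ring
      have e1 : Complex.exp ((α.re : ℂ) + ((β.im / l + x : ℝ) : ℂ) * Complex.I) =
          Complex.exp (w + ((α.re - β.re / l : ℝ) : ℂ)) := by
        rw [h1, Complex.exp_add, Complex.exp_int_mul_two_pi_mul_I, mul_one]
      have e2 : Complex.exp ((l : ℂ) * w) = v := by
        rw [h2, Complex.exp_add, Complex.exp_int_mul_two_pi_mul_I, mul_one,
          Complex.re_add_im, hβ, Complex.exp_log hv]
      simp only [hg, hS, Set.mem_setOf_eq]
      rw [Prod.mk.injEq]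
      exact ⟨e1, e2.symm⟩
    have hmem : (α.im - β.im / l) ∈ closure (↑(AddSubgroup.closure
        ({2 * Real.pi / l, 2 * Real.pi} : Set ℝ)) : Set ℝ) := dense_sub l hl _
    have hval : g (α.im - β.im / l) = (u, v) := by
      simp only [hg]
      have h3 : (β.im / l + (α.im - β.im / l) : ℝ) = α.im := by ring
      rw [h3, Complex.re_add_im, hα, Complex.exp_log hu]
    have hcl := mem_closure_image hgc.continuousAt hmem
    rw [hval] at hcl
    have hsub : g '' (↑(AddSubgroup.closure
        ({2 * Real.pi / l, 2 * Real.pi} : Set ℝ)) : Set ℝ) ⊆ S := by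
      rintro _ ⟨x, hx, rfl⟩
      exact himg x hx
    exact closure_mono hsub hcl
  have hdense : Dense ({(0 : ℂ)}ᶜ ×ˢ {(0 : ℂ)}ᶜ : Set (ℂ × ℂ)) :=
    (dense_compl_singleton 0).prod (dense_compl_singleton 0)
  apply Dense.of_closure
  apply hdense.mono
  rintro ⟨u, v⟩ ⟨hu, hv⟩
  exact key u v hu hv
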